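/- arXiv:1701.07112 — 2 statements merged into one kernel-verified Lean document; each statement's English description precedes it below -/
import Mathlib

section
/- Let W be a memoryless channel with input alphabet F_q and finite output alphabet Y, with transition probabilities W(y|x). Assume the input X is uniformly distributed on F_q. Define for each output y the posterior vector π_y(α) = W(y|α) / Σ_{β∈F_q} W(y|β), the Koetter-Vardy capacity C_KV = E_y[Σ_α π_y(α)^2], and the Bhattacharyya parameter B(W) = (1/(q(q-1)))·Σ_{x≠x'} Σ_y sqrt(W(y|x)·W(y|x')). Then C_KV ≥ 1 - (q-1)·B(W). -/
open Finset

lemma sum_sq_add_offdiag' {α : Type*} [Fintype α] [DecidableEq α] (f : α → ℝ) :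
    (∑ a, f a) * (∑ a, f a) =
      (∑ a, (f a)^2) + ∑ p ∈ Finset.univ.filter (fun p : α × α => p.1 ≠ p.2), f p.1 * f p.2 := by
  rw [Finset.sum_mul_sum,
    show (∑ i, ∑ j, f i * f j) = ∑ p : α × α, f p.1 * f p.2 from
      (Fintype.sum_prod_type (f := fun p : α × α => f p.1 * f p.2)).symm,
    ← Finset.sum_filter_add_sum_filter_not Finset.univ (fun p : α × α => p.1 = p.2)
      (fun p => f p.1 * f p.2)]
  congr 1
  · rw [Finset.sum_filter, Fintype.sum_prod_type]
    simp [Finset.sum_ite_eq, sq]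

/-- `C_KV ≥ 1 - (q-1)·B(W)`: the Koetter-Vardy capacity of a `q`-ary input channel with
uniformly distributed input is lower bounded in terms of its Bhattacharyya parameter.
Here `π_y(a) = W(y|a)/∑_b W(y|b)`, the output distribution is `y ↦ (∑_x W(y|x))/q`,
`C_KV = E_y[∑_a π_y(a)²]` and
`B(W) = (1/(q(q-1)))·∑_{x≠x'}∑_y sqrt(W(y|x)·W(y|x'))`. -/
theorem stmt_6 {α β : Type*} [Fintype α] [Fintype β] [DecidableEq α]
    (q : ℕ) (hcard : Fintype.card α = q) (hq : 2 ≤ q)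
    (W : α → β → ℝ) (hW0 : ∀ x y, 0 ≤ W x y) (hrow : ∀ x, ∑ y, W x y = 1)
    (hcol : ∀ y, 0 < ∑ x, W x y)
    (CKV B : ℝ)
    (hCKV : CKV = ∑ y, ((∑ x, W x y) / (q : ℝ)) * ∑ a, (W a y / ∑ b, W b y) ^ 2)
    (hB : B = (1 / ((q : ℝ) * ((q : ℝ) - 1))) *
      ∑ xx ∈ Finset.univ.filter (fun xx : α × α => xx.1 ≠ xx.2),
        ∑ y, Real.sqrt (W xx.1 y * W xx.2 y)) :
    CKV ≥ 1 - ((q : ℝ) - 1) * B := by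
  have hqR : (0:ℝ) < (q:ℝ) := by
    have : (2:ℝ) ≤ (q:ℝ) := by exact_mod_cast hq
    linarith
  have hq1 : (0:ℝ) < (q:ℝ) - 1 := by
    have : (2:ℝ) ≤ (q:ℝ) := by exact_mod_cast hq
    linarith
  set P := Finset.univ.filter (fun xx : α × α => xx.1 ≠ xx.2) with hP
  -- key per-output inequality
  have key : ∀ y, ((∑ x, W x y) / (q:ℝ)) * ∑ a, (W a y / ∑ b, W b y) ^ 2
      ≥ (∑ x, W x y) / q - (1/(q:ℝ)) * ∑ p ∈ P, Real.sqrt (W p.1 y * W p.2 y) := by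
    intro y
    set S : ℝ := ∑ x, W x y with hSdef
    have hS : 0 < S := hcol y
    have hle : ∀ a, W a y ≤ S := fun a =>
      Finset.single_le_sum (fun x _ => hW0 x y) (Finset.mem_univ a)
    -- off-diagonal product sum bounded by S * sqrt-sum
    have hoff : ∑ p ∈ P, W p.1 y * W p.2 y ≤ S * ∑ p ∈ P, Real.sqrt (W p.1 y * W p.2 y) := by
      rw [Finset.mul_sum]
      apply Finset.sum_le_sum
      intro p _
      have h0 : 0 ≤ W p.1 y * W p.2 y := mul_nonneg (hW0 _ _) (hW0 _ _)
      have hs : Real.sqrt (W p.1 y * W p.2 y) ≤ S := by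
        rw [show S = Real.sqrt (S * S) by rw [Real.sqrt_mul_self hS.le]]
        exact Real.sqrt_le_sqrt (mul_le_mul (hle _) (hle _) (hW0 _ _) hS.le)
      calc W p.1 y * W p.2 y
          = Real.sqrt (W p.1 y * W p.2 y) * Real.sqrt (W p.1 y * W p.2 y) :=
            (Real.mul_self_sqrt h0).symm
        _ ≤ S * Real.sqrt (W p.1 y * W p.2 y) :=
            mul_le_mul_of_nonneg_right hs (Real.sqrt_nonneg _)
    have hsq : S * S = (∑ a, (W a y)^2) + ∑ p ∈ P, W p.1 y * W p.2 y :=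
      sum_sq_add_offdiag' (fun a => W a y)
    set T : ℝ := ∑ p ∈ P, Real.sqrt (W p.1 y * W p.2 y) with hT
    set A : ℝ := ∑ a, (W a y)^2 with hA
    have h1 : ∑ a, (W a y / S)^2 = A / S^2 := by
      rw [hA, Finset.sum_div]
      exact Finset.sum_congr rfl fun a _ => div_pow _ _ _
    have hT0 : 0 ≤ T := Finset.sum_nonneg fun p _ => Real.sqrt_nonneg _
    rw [ge_iff_le, h1]
    have hLHS : S / (q:ℝ) * (A / S^2) = A / ((q:ℝ) * S) := by
      field_simp
    rw [hLHS]
    have h2 : S * S - S * T ≤ A := by linarith [hsq, hoff]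
    have h3 : S / (q:ℝ) - (1/(q:ℝ)) * T = (S*S - S*T)/((q:ℝ)*S) := by
      field_simp
    rw [h3]
    gcongr
  -- sum over y
  have hsum1 : ∑ y, (∑ x, W x y) = (q:ℝ) := by
    rw [Finset.sum_comm]
    simp [hrow, hcard]
  have hBval : ((q:ℝ) - 1) * B = (1/(q:ℝ)) * ∑ p ∈ P, ∑ y, Real.sqrt (W p.1 y * W p.2 y) := by
    rw [hB]
    field_simp
  rw [hCKV, ge_iff_le, hBval]
  calc 1 - (1/(q:ℝ)) * ∑ p ∈ P, ∑ y, Real.sqrt (W p.1 y * W p.2 y)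
      = ∑ y, ((∑ x, W x y) / q - (1/(q:ℝ)) * ∑ p ∈ P, Real.sqrt (W p.1 y * W p.2 y)) := by
        rw [Finset.sum_sub_distrib, ← Finset.sum_div, hsum1, div_self hqR.ne',
          ← Finset.mul_sum, Finset.sum_comm]
    _ ≤ ∑ y, ((∑ x, W x y) / (q:ℝ)) * ∑ a, (W a y / ∑ b, W b y) ^ 2 :=
        Finset.sum_le_sum (fun y _ => key y)
end

section
/- Let W be a weakly symmetric discrete memoryless channel with input alphabet F_q and finite output alphabet Y, with uniformly distributed input. For each output y, let π_y(α) = W(y|α)/Σ_β W(y|β) be the posterior distribution. Then for every fixed input x ∈ F_q, E_{y∼W(·|x)}[π_y(x)] = E_{y∼W(·|x)}[Σ_{α∈F_q} π_y(α)^2]. -/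
open Finset

/-- For a weakly symmetric channel `W` with `q`-ary input (partition of the output alphabet
given by `part : β → ι`, each submatrix having rows that are permutations of each other and
columns that are permutations of each other) and uniformly distributed input, for every input
`x` the expectation over `y ∼ W(·|x)` of `π_y(x)` equals that of `∑_a π_y(a)²`, where
`π_y(a) = W(y|a)/∑_b W(y|b)`. -/
theorem stmt_7 {α β ι : Type*} [Fintype α] [Fintype β] [Fintype ι]
    (W : α → β → ℝ) (hW0 : ∀ x y, 0 ≤ W x y) (hrow : ∀ x, ∑ y, W x y = 1)
    (hcol : ∀ y, 0 < ∑ x, W x y)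
    (part : β → ι)
    (hrowsym : ∀ (i : ι) (x x' : α), ∃ σ : {y : β // part y = i} ≃ {y : β // part y = i},
      ∀ y : {y : β // part y = i}, W x' (σ y : β) = W x (y : β))
    (hcolsym : ∀ (i : ι) (y y' : β), part y = i → part y' = i →
      ∃ σ : α ≃ α, ∀ x : α, W (σ x) y' = W x y)
    (x : α) :
    ∑ y, W x y * (W x y / ∑ b, W b y) =
      ∑ y, W x y * ∑ a, (W a y / ∑ b, W b y) ^ 2 := by
  classical
  set S : β → ℝ := fun y => ∑ b, W b y with hS
  set T : β → ℝ := fun y => ∑ a, (W a y) ^ 2 with hT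
  have hA : (Fintype.card α : ℝ) ≠ 0 := by
    have : 0 < Fintype.card α := Fintype.card_pos_iff.mpr ⟨x⟩
    positivity
  -- rewrite RHS inner sum
  have hinner : ∀ y, (∑ a, (W a y / S y) ^ 2) = T y / (S y) ^ 2 := by
    intro y
    rw [hT, Finset.sum_div]
    exact Finset.sum_congr rfl fun a _ => by rw [div_pow]
  have key : ∀ i : ι,
      ∑ y ∈ Finset.univ.filter (fun y => part y = i), W x y * (W x y / S y) =
      ∑ y ∈ Finset.univ.filter (fun y => part y = i), W x y * (T y / (S y) ^ 2) := by
    intro i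
    set B := Finset.univ.filter (fun y => part y = i) with hB
    have hmem : ∀ y, y ∈ B ↔ part y = i := by
      intro y; simp [hB]
    rcases B.eq_empty_or_nonempty with he | ⟨y₀, hy₀⟩
    · simp [he]
    · -- S and T constant on B
      have hScol : ∀ y ∈ B, S y = S y₀ := by
        intro y hy
        obtain ⟨σ, hσ⟩ := hcolsym i y y₀ ((hmem y).1 hy) ((hmem y₀).1 hy₀)
        calc S y = ∑ a, W (σ a) y₀ := by rw [hS]; exact (Finset.sum_congr rfl fun a _ => (hσ a).symm)
          _ = S y₀ := Equiv.sum_comp σ (fun a => W a y₀)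
      have hTcol : ∀ y ∈ B, T y = T y₀ := by
        intro y hy
        obtain ⟨σ, hσ⟩ := hcolsym i y y₀ ((hmem y).1 hy) ((hmem y₀).1 hy₀)
        calc T y = ∑ a, (W (σ a) y₀) ^ 2 := by
              rw [hT]; exact (Finset.sum_congr rfl fun a _ => by rw [hσ a])
          _ = T y₀ := Equiv.sum_comp σ (fun a => (W a y₀) ^ 2)
      -- row sums constant over a
      have hrsum : ∀ a : α, ∑ y ∈ B, W a y = ∑ y ∈ B, W x y := by
        intro a
        obtain ⟨σ, hσ⟩ := hrowsym i x a
        rw [Finset.sum_subtype B hmem (fun y => W a y),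
            Finset.sum_subtype B hmem (fun y => W x y)]
        calc ∑ y : {y : β // part y = i}, W a (y : β)
            = ∑ y : {y : β // part y = i}, W a (σ y : β) :=
              (Equiv.sum_comp σ (fun y => W a (y : β))).symm
          _ = ∑ y : {y : β // part y = i}, W x (y : β) :=
              Finset.sum_congr rfl fun y _ => hσ y
      have hRsum : ∀ a : α, ∑ y ∈ B, (W a y) ^ 2 = ∑ y ∈ B, (W x y) ^ 2 := by
        intro a
        obtain ⟨σ, hσ⟩ := hrowsym i x a
        rw [Finset.sum_subtype B hmem (fun y => (W a y) ^ 2),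
            Finset.sum_subtype B hmem (fun y => (W x y) ^ 2)]
        calc ∑ y : {y : β // part y = i}, (W a (y : β)) ^ 2
            = ∑ y : {y : β // part y = i}, (W a (σ y : β)) ^ 2 :=
              (Equiv.sum_comp σ (fun y => (W a (y : β)) ^ 2)).symm
          _ = ∑ y : {y : β // part y = i}, (W x (y : β)) ^ 2 :=
              Finset.sum_congr rfl fun y _ => by rw [hσ y]
      set rx := ∑ y ∈ B, W x y with hrx
      set Rx := ∑ y ∈ B, (W x y) ^ 2 with hRx
      -- counting identities
      have hc1 : (B.card : ℝ) * S y₀ = (Fintype.card α : ℝ) * rx := by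
        have h1 : ∑ y ∈ B, S y = (B.card : ℝ) * S y₀ := by
          rw [Finset.sum_congr rfl hScol, Finset.sum_const, nsmul_eq_mul]
        have h2 : ∑ y ∈ B, S y = (Fintype.card α : ℝ) * rx := by
          simp only [hS]
          rw [Finset.sum_comm]
          calc ∑ a : α, ∑ y ∈ B, W a y = ∑ a : α, rx :=
                Finset.sum_congr rfl fun a _ => hrsum a
            _ = (Fintype.card α : ℝ) * rx := by
                rw [Finset.sum_const, nsmul_eq_mul, Finset.card_univ]
        rw [← h1, h2]
      have hc2 : (B.card : ℝ) * T y₀ = (Fintype.card α : ℝ) * Rx := by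
        have h1 : ∑ y ∈ B, T y = (B.card : ℝ) * T y₀ := by
          rw [Finset.sum_congr rfl hTcol, Finset.sum_const, nsmul_eq_mul]
        have h2 : ∑ y ∈ B, T y = (Fintype.card α : ℝ) * Rx := by
          simp only [hT]
          rw [Finset.sum_comm]
          calc ∑ a : α, ∑ y ∈ B, (W a y) ^ 2 = ∑ a : α, Rx :=
                Finset.sum_congr rfl fun a _ => hRsum a
            _ = (Fintype.card α : ℝ) * Rx := by
                rw [Finset.sum_const, nsmul_eq_mul, Finset.card_univ]
        rw [← h1, h2]
      have hs0 : S y₀ ≠ 0 := ne_of_gt (hcol y₀)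
      have hkey : Rx * S y₀ = rx * T y₀ := by
        have : (Fintype.card α : ℝ) * (Rx * S y₀) = (Fintype.card α : ℝ) * (rx * T y₀) := by
          linear_combination T y₀ * hc1 - S y₀ * hc2
        exact mul_left_cancel₀ hA this
      -- finish the per-part identity
      calc ∑ y ∈ B, W x y * (W x y / S y)
          = ∑ y ∈ B, (W x y) ^ 2 / S y₀ := by
            refine Finset.sum_congr rfl fun y hy => ?_
            rw [hScol y hy]; ring
        _ = Rx / S y₀ := by rw [hRx, Finset.sum_div]
        _ = rx * (T y₀ / (S y₀) ^ 2) := by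
            field_simp
            linear_combination hkey
        _ = ∑ y ∈ B, W x y * (T y / (S y) ^ 2) := by
            rw [hrx, Finset.sum_mul]
            refine Finset.sum_congr rfl fun y hy => ?_
            rw [hScol y hy, hTcol y hy]
  calc ∑ y, W x y * (W x y / S y)
      = ∑ i : ι, ∑ y ∈ Finset.univ.filter (fun y => part y = i), W x y * (W x y / S y) :=
        (Finset.sum_fiberwise Finset.univ part _).symm
    _ = ∑ i : ι, ∑ y ∈ Finset.univ.filter (fun y => part y = i), W x y * (T y / (S y) ^ 2) :=
        Finset.sum_congr rfl fun i _ => key i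
    _ = ∑ y, W x y * (T y / (S y) ^ 2) := Finset.sum_fiberwise Finset.univ part _
    _ = ∑ y, W x y * ∑ a, (W a y / S y) ^ 2 :=
        Finset.sum_congr rfl fun y _ => by rw [hinner y]
end
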